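/- Let X be a locally compact Hausdorff space and g : X → ℂ a continuous unbounded function. Then there exists f in C₀(X, ℂ) such that the product f·g is unbounded. -/

import Mathlib

open Filter Set ZeroAtInftyContinuousMap

noncomputable def evalHom {X : Type*} [TopologicalSpace X] (x : X) :
    ZeroAtInftyContinuousMap X ℝ →+ ℝ where
  toFun f := f x
  map_zero' := rfl
  map_add' _ _ := rfl

theorem continuous_evalHom {X : Type*} [TopologicalSpace X] (x : X) :
    Continuous (evalHom (X := X) x) := by
  refine (LipschitzWith.mk_one fun f g => ?_).continuous
  exact BoundedContinuousFunction.dist_coe_le_dist (f := f.toBCF) (g := g.toBCF) x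

theorem stmt_11 {X : Type*} [TopologicalSpace X] [LocallyCompactSpace X] [T2Space X]
    (g : X → ℂ) (hgc : Continuous g) (hgu : ¬∃ C : ℝ, ∀ x, ‖g x‖ ≤ C) :
    ∃ f : ZeroAtInftyContinuousMap X ℂ, ¬∃ C : ℝ, ∀ x, ‖f x * g x‖ ≤ C := by
  push_neg at hgu
  -- choose points where g is large
  have hx : ∀ n : ℕ, ∃ p : X, (n * 2 ^ n : ℝ) < ‖g p‖ := fun n => hgu _
  choose x hxg using hx
  -- bump functions
  have hbump : ∀ n : ℕ, ∃ b : ZeroAtInftyContinuousMap X ℝ,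
      b (x n) = 1 ∧ (∀ y, b y ∈ Icc (0:ℝ) 1) := by
    intro n
    obtain ⟨b, hb1, _, hbc, hb01⟩ :=
      exists_continuous_one_zero_of_isCompact (isCompact_singleton (x := x n))
        isClosed_empty (disjoint_empty _)
    exact ⟨⟨b, hbc.is_zero_at_infty⟩, hb1 rfl, hb01⟩
  choose b hb1 hb01 using hbump
  -- norm bounds
  have hbn : ∀ n, ‖b n‖ ≤ 1 := by
    intro n
    rw [← norm_toBCF_eq_norm]
    refine (BoundedContinuousFunction.norm_le zero_le_one).2 fun y => ?_
    have h := hb01 n y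
    have : (b n).toBCF y = b n y := rfl
    rw [this, Real.norm_eq_abs, abs_le]
    exact ⟨by linarith [h.1], h.2⟩
  set F : ℕ → ZeroAtInftyContinuousMap X ℝ := fun n => (2⁻¹ : ℝ) ^ n • b n with hF
  have hFle : ∀ n, ‖F n‖ ≤ (2⁻¹ : ℝ) ^ n := by
    intro n
    show ‖(2⁻¹:ℝ) ^ n • b n‖ ≤ _
    rw [← norm_toBCF_eq_norm]
    refine (BoundedContinuousFunction.norm_le (by positivity)).2 fun y => ?_
    have hval : ((2⁻¹:ℝ) ^ n • b n).toBCF y = (2⁻¹:ℝ) ^ n * b n y := rfl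
    rw [hval, Real.norm_eq_abs, abs_mul, abs_of_nonneg (a := (2⁻¹:ℝ) ^ n) (by positivity)]
    have h := hb01 n y
    have habs : |b n y| ≤ 1 := abs_le.2 ⟨by linarith [h.1], h.2⟩
    calc (2⁻¹:ℝ) ^ n * |b n y| ≤ (2⁻¹:ℝ) ^ n * 1 :=
          mul_le_mul_of_nonneg_left habs (by positivity)
      _ = (2⁻¹:ℝ) ^ n := mul_one _
  have hsum : Summable F := by
    refine Summable.of_norm_bounded ?_ hFle
    exact summable_geometric_of_lt_one (by norm_num) (by norm_num)
  set f : ZeroAtInftyContinuousMap X ℝ := ∑' n, F n with hf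
  -- pointwise evaluation
  have heval : ∀ y : X, HasSum (fun n => F n y) (f y) := by
    intro y
    have := (hsum.hasSum).map (evalHom y) (continuous_evalHom y)
    exact this
  have hFnn : ∀ n y, 0 ≤ F n y := by
    intro n y
    simp only [hF, ZeroAtInftyContinuousMap.coe_smul, Pi.smul_apply, smul_eq_mul]
    exact mul_nonneg (by positivity) (hb01 n y).1
  have hflb : ∀ n : ℕ, (2⁻¹ : ℝ) ^ n ≤ f (x n) := by
    intro n
    have := (heval (x n)).summable
    calc (2⁻¹:ℝ) ^ n = F n (x n) := by
          simp [hF, hb1 n]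
      _ ≤ ∑' k, F k (x n) := Summable.le_tsum this n (fun k _ => hFnn k (x n))
      _ = f (x n) := (heval (x n)).tsum_eq
  -- the complex-valued C₀ function
  refine ⟨⟨⟨fun y => (f y : ℂ), Complex.continuous_ofReal.comp (map_continuous f)⟩, ?_⟩, ?_⟩
  · have : Tendsto (fun r : ℝ => (r : ℂ)) (nhds 0) (nhds 0) := by
      simpa using Complex.continuous_ofReal.tendsto 0
    exact this.comp (zero_at_infty f)
  · rintro ⟨C, hC⟩
    set N : ℕ := ⌈C⌉₊ + 1 with hN
    have h1 : ‖(f (x N) : ℂ) * g (x N)‖ ≤ C := hC (x N)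
    have h2 : (N : ℝ) ≤ ‖(f (x N) : ℂ) * g (x N)‖ := by
      rw [norm_mul, Complex.norm_real, Real.norm_eq_abs,
        abs_of_nonneg (le_trans (by positivity) (hflb N))]
      calc (N : ℝ) = (2⁻¹:ℝ) ^ N * (N * 2 ^ N) := by
            field_simp
            rw [mul_assoc, ← mul_pow]; norm_num
        _ ≤ f (x N) * ‖g (x N)‖ := by
            apply mul_le_mul (hflb N) (le_of_lt (hxg N)) (by positivity)
            exact le_trans (by positivity) (hflb N)
    have h3 : C < (N : ℝ) := by
      have := Nat.le_ceil C
      push_cast [hN]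
      linarith
    linarith
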